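/- Let n, m be coprime positive integers, k a field of characteristic 0. For a function μ : {1, ..., 2(n+m)} → k, suppose μ(p+n) = μ(p) - 1 whenever 1 ≤ p ≤ n + 2m and μ(q+m) = μ(q) whenever 1 ≤ q ≤ 2n + m. Then Σ_{r=1}^{n}(μ(n + 2m + r) - μ(r)) = -n, but also (by splitting the sum according to division of 2(n+m) by n) this sum equals -(n + 2m); hence no such μ exists. -/
import Mathlib


open Finset

/-- Let `n, m` be coprime positive integers, `k` a field of characteristic 0.
For `μ : ℕ → k` with `μ(p + n) = μ(p) - 1` whenever `1 ≤ p ≤ n + 2m` and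
`μ(q + m) = μ(q)` whenever `1 ≤ q ≤ 2n + m`, one has
`Σ_{r=1}^{n} (μ(n + 2m + r) - μ(r)) = -n` and also this sum equals `-(n + 2m)`;
hence no such `μ` exists. -/
theorem no_mu_nat (k : Type*) [Field k] [CharZero k]
    (n m : ℕ) (hn : 0 < n) (hm : 0 < m) (hc : Nat.Coprime n m)
    (μ : ℕ → k)
    (hx : ∀ p : ℕ, 1 ≤ p → p ≤ n + 2 * m → μ (p + n) = μ p - 1)
    (hy : ∀ q : ℕ, 1 ≤ q → q ≤ 2 * n + m → μ (q + m) = μ q) :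
    (∑ r ∈ Icc 1 n, (μ (n + 2 * m + r) - μ r) = -(n : k)) ∧
      (∑ r ∈ Icc 1 n, (μ (n + 2 * m + r) - μ r) = -((n : k) + 2 * m)) ∧ False := by
  have h1 : ∑ r ∈ Icc 1 n, (μ (n + 2 * m + r) - μ r) = -(n : k) := by
    have hterm : ∀ r ∈ Icc 1 n, μ (n + 2 * m + r) - μ r = -1 := by
      intro r hr
      simp only [mem_Icc] at hr
      have e1 := hx r hr.1 (by omega)
      have e2 := hy (r + n) (by omega) (by omega)
      have e3 := hy (r + n + m) (by omega) (by omega)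
      have hrw : n + 2 * m + r = r + n + m + m := by omega
      rw [hrw, e3, e2, e1]; ring
    rw [Finset.sum_congr rfl hterm]
    simp [Nat.card_Icc]
  have h2' : ∑ p ∈ Icc 1 (n + 2 * m), (μ (p + n) - μ p) = -((n : k) + 2 * m) := by
    have hterm : ∀ p ∈ Icc 1 (n + 2 * m), μ (p + n) - μ p = -1 := by
      intro p hp
      simp only [mem_Icc] at hp
      rw [hx p hp.1 hp.2]; ring
    rw [Finset.sum_congr rfl hterm]
    simp [Nat.card_Icc]
  have key : ∑ r ∈ Icc 1 n, (μ (n + 2 * m + r) - μ r)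
      = ∑ p ∈ Icc 1 (n + 2 * m), (μ (p + n) - μ p) := by
    set N := n + 2 * m with hN
    rw [Finset.sum_sub_distrib, Finset.sum_sub_distrib]
    have A : ∑ r ∈ Icc 1 n, μ (N + r) = ∑ x ∈ Icc (N + 1) (N + n), μ x := by
      rw [← Finset.map_add_left_Icc, Finset.sum_map]; rfl
    have B : ∑ p ∈ Icc 1 N, μ (p + n) = ∑ x ∈ Icc (n + 1) (n + N), μ x := by
      rw [← Finset.map_add_left_Icc, Finset.sum_map]
      apply Finset.sum_congr rfl
      intro x _
      simp [addLeftEmbedding, Nat.add_comm]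
    rw [A, B]
    have C1 : ∑ x ∈ Ioc 0 n, μ x + ∑ x ∈ Ioc n (n + N), μ x = ∑ x ∈ Ioc 0 (n + N), μ x :=
      Finset.sum_Ioc_consecutive μ (Nat.zero_le n) (by omega)
    have C2 : ∑ x ∈ Ioc 0 N, μ x + ∑ x ∈ Ioc N (N + n), μ x = ∑ x ∈ Ioc 0 (N + n), μ x :=
      Finset.sum_Ioc_consecutive μ (Nat.zero_le N) (by omega)
    have e1 : Icc 1 n = Ioc 0 n := Finset.Icc_add_one_left_eq_Ioc 0 n
    have e2 : Icc 1 N = Ioc 0 N := Finset.Icc_add_one_left_eq_Ioc 0 N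
    have e3 : Icc (N + 1) (N + n) = Ioc N (N + n) := Finset.Icc_add_one_left_eq_Ioc N (N + n)
    have e4 : Icc (n + 1) (n + N) = Ioc n (n + N) := Finset.Icc_add_one_left_eq_Ioc n (n + N)
    rw [e1, e2, e3, e4]
    simp only [show n + N = N + n from Nat.add_comm n N] at C1 ⊢
    linear_combination C2 - C1
  have hfalse : False := by
    have := h1.symm.trans (key.trans h2')
    have hm' : (m : k) ≠ 0 := Nat.cast_ne_zero.mpr (by omega)
    have h2m : (2 : k) * m = 0 := by linear_combination this
    rcases mul_eq_zero.mp h2m with h | h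
    · exact two_ne_zero h
    · exact hm' h
  exact ⟨h1, hfalse.elim, hfalse⟩
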